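/- Suppose u : ℝ × ℂ → ℂ is of the form u(t,z) = e^{-iλt}(R_{αt}U)(z) with α ≠ 0 and U ∈ L²(ℂ) ∩ L^{2,s}, U ≠ 0, where s ≥ 0. Then ‖⟨z⟩^s u(t)‖_{L²(ℂ)} = ‖⟨z - αt⟩^s U‖_{L²(ℂ)}, and ‖⟨z⟩^s u(t)‖_{L²(ℂ)} / (|α|^s |t|^s) → ‖U‖_{L²(ℂ)} as t → ±∞. -/

import Mathlib

open MeasureTheory Complex Filter

noncomputable section

/-- Magnetic translation R_β. -/
def Rmag (β : ℂ) (u : ℂ → ℂ) (z : ℂ) : ℂ :=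
  u (z + β) * Complex.exp (((starRingEnd ℂ) z * β - z * (starRingEnd ℂ) β) / 2)

lemma key (s : ℝ) (hs : 0 ≤ s) (α : ℂ) (hα : α ≠ 0)
    (U : ℂ → ℂ) (hU2 : MemLp U 2 volume)
    (hUs : Integrable (fun z : ℂ => (1 + ‖z‖ ^ 2) ^ s * ‖U z‖ ^ 2))
    (l : Filter ℝ) [l.IsCountablyGenerated]
    (hl : Tendsto (fun t : ℝ => |t|) l atTop) :
    Tendsto (fun t : ℝ =>
      Real.sqrt (∫ z : ℂ, (1 + ‖z - α * t‖ ^ 2) ^ s * ‖U z‖ ^ 2) / (‖α‖ ^ s * |t| ^ s))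
      l (nhds (Real.sqrt (∫ z : ℂ, ‖U z‖ ^ 2))) := by
  have hαpos : 0 < ‖α‖ := norm_pos_iff.mpr hα
  set F : ℝ → ℂ → ℝ :=
    fun t z => ((1 + ‖z - α * t‖ ^ 2) / (‖α‖ * |t|) ^ 2) ^ s * ‖U z‖ ^ 2 with hFdef
  have hUm : AEStronglyMeasurable (fun z : ℂ => ‖U z‖ ^ 2) volume := by
    have h := hU2.aestronglyMeasurable.norm
    exact h.pow 2
  have htz : ∀ᶠ t in l, t ≠ 0 := by
    filter_upwards [hl.eventually (eventually_ge_atTop 1)] with t ht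
    rintro rfl; simp at ht; linarith
  have hev : ∀ᶠ t in l, 1 ≤ ‖α‖ * |t| := by
    filter_upwards [hl.eventually (eventually_ge_atTop (‖α‖⁻¹))] with t ht
    nlinarith [mul_inv_cancel₀ (ne_of_gt hαpos)]
  have hG : Tendsto (fun t => ∫ z, F t z) l (nhds (∫ z : ℂ, ‖U z‖ ^ 2)) := by
    apply tendsto_integral_filter_of_dominated_convergence
      (bound := fun z : ℂ => 3 ^ s * ((1 + ‖z‖ ^ 2) ^ s * ‖U z‖ ^ 2))
    · refine Eventually.of_forall fun t => ?_
      refine AEStronglyMeasurable.mul ?_ hUm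
      refine Continuous.aestronglyMeasurable ?_
      apply Continuous.rpow_const
      · fun_prop
      · intro x; exact Or.inr hs
    · filter_upwards [hev] with t ht
      refine ae_of_all _ fun z => ?_
      have hd1 : (1:ℝ) ≤ (‖α‖ * |t|) ^ 2 := by nlinarith
      have hnorm : ‖α * (t:ℂ)‖ = ‖α‖ * |t| := by
        simp [norm_mul, Complex.norm_real, Real.norm_eq_abs]
      have hr : (1 + ‖z - α * t‖ ^ 2) / (‖α‖ * |t|) ^ 2 ≤ 3 * (1 + ‖z‖ ^ 2) := by
        rw [div_le_iff₀ (by nlinarith)]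
        have h1 : ‖z - α * t‖ ≤ ‖z‖ + ‖α * (t:ℂ)‖ := norm_sub_le _ _
        rw [hnorm] at h1
        nlinarith [norm_nonneg z, norm_nonneg (z - α * (t:ℂ)),
          sq_nonneg (‖z‖ - ‖α‖ * |t|), sq_nonneg (‖z‖ * (‖α‖ * |t|))]
      have hrn : (0:ℝ) ≤ (1 + ‖z - α * t‖ ^ 2) / (‖α‖ * |t|) ^ 2 := by positivity
      have h2 := Real.rpow_le_rpow hrn hr hs
      rw [Real.mul_rpow (by norm_num) (by positivity)] at h2
      have hFnn : (0:ℝ) ≤ F t z := by simp only [hFdef]; positivity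
      rw [Real.norm_eq_abs, _root_.abs_of_nonneg hFnn]
      calc F t z ≤ (3 ^ s * (1 + ‖z‖ ^ 2) ^ s) * ‖U z‖ ^ 2 :=
            mul_le_mul_of_nonneg_right h2 (by positivity)
        _ = 3 ^ s * ((1 + ‖z‖ ^ 2) ^ s * ‖U z‖ ^ 2) := by ring
    · exact hUs.const_mul _
    · refine ae_of_all _ fun z => ?_
      have hinv : Tendsto (fun t : ℝ => (‖α‖ * |t|)⁻¹) l (nhds 0) :=
        ((hl.const_mul_atTop hαpos).inv_tendsto_atTop).congr fun t => rfl
      have h0 : Tendsto (fun t : ℝ => ((α * t : ℂ))⁻¹) l (nhds 0) := by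
        rw [tendsto_zero_iff_norm_tendsto_zero]
        refine hinv.congr fun t => ?_
        simp [norm_inv, norm_mul, Complex.norm_real, Real.norm_eq_abs]
      have hratio : Tendsto (fun t : ℝ => (1 + ‖z - α * t‖ ^ 2) / (‖α‖ * |t|) ^ 2)
          l (nhds 1) := by
        have ha : Tendsto (fun t : ℝ => z * ((α * t : ℂ))⁻¹) l (nhds 0) := by
          simpa using h0.const_mul z
        have hb : Tendsto (fun t : ℝ => ‖z * (α * t : ℂ)⁻¹ - 1‖ ^ 2) l (nhds 1) := by
          have hc : Tendsto (fun t : ℝ => ‖z * (α * t : ℂ)⁻¹ - 1‖) l (nhds 1) := by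
            have := (ha.sub_const 1).norm
            simpa using this
          simpa using hc.pow 2
        have hsum := (hinv.pow 2).add hb
        rw [show (0:ℝ)^2 + 1 = 1 by norm_num] at hsum
        refine hsum.congr' ?_
        filter_upwards [htz] with t ht
        have htC : ((t:ℝ):ℂ) ≠ 0 := by exact_mod_cast ht
        have hαt : (α * t : ℂ) ≠ 0 := mul_ne_zero hα htC
        have hn : ‖(α * (t:ℝ) : ℂ)‖ = ‖α‖ * |t| := by
          simp [norm_mul, Complex.norm_real, Real.norm_eq_abs]
        have e1 : z * (α * t : ℂ)⁻¹ - 1 = (z - α * t) * (α * t : ℂ)⁻¹ := by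
          field_simp
        rw [e1, norm_mul, norm_inv, hn]
        have hd : (0:ℝ) < ‖α‖ * |t| := by
          have : |t| ≠ 0 := abs_ne_zero.mpr ht
          positivity
        field_simp
      have := (hratio.rpow_const (Or.inr hs)).mul_const (‖U z‖ ^ 2)
      simpa [Real.one_rpow] using this
  have hsq : Tendsto (fun t => Real.sqrt (∫ z, F t z)) l
      (nhds (Real.sqrt (∫ z : ℂ, ‖U z‖ ^ 2))) :=
    (Real.continuous_sqrt.tendsto _).comp hG
  refine hsq.congr' ?_
  filter_upwards [htz] with t ht
  have habs : (0:ℝ) < |t| := abs_pos.mpr ht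
  have hd : (0:ℝ) < ‖α‖ * |t| := mul_pos hαpos habs
  have e : ∀ z : ℂ, F t z
      = (((‖α‖ * |t|) ^ s) ^ 2)⁻¹ * ((1 + ‖z - α * t‖ ^ 2) ^ s * ‖U z‖ ^ 2) := by
    intro z
    rw [hFdef]
    simp only
    rw [Real.div_rpow (by positivity) (by positivity)]
    have h2 : (((‖α‖ * |t|) ^ 2 : ℝ)) ^ s = ((‖α‖ * |t|) ^ s) ^ 2 := by
      rw [sq, sq, ← Real.mul_rpow hd.le hd.le]
    rw [h2]; ring
  have e2 : (∫ z, F t z)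
      = (((‖α‖ * |t|) ^ s) ^ 2)⁻¹ * ∫ z : ℂ, (1 + ‖z - α * t‖ ^ 2) ^ s * ‖U z‖ ^ 2 := by
    simp only [e]
    exact integral_const_mul _ _
  rw [e2, Real.sqrt_mul (by positivity), Real.sqrt_inv, Real.sqrt_sq (by positivity),
    Real.mul_rpow hαpos.le (abs_nonneg t)]
  exact inv_mul_eq_div _ _

lemma norm_Rmag (β : ℂ) (U : ℂ → ℂ) (z : ℂ) : ‖Rmag β U z‖ = ‖U (z + β)‖ := by
  have h : (((starRingEnd ℂ) z * β - z * (starRingEnd ℂ) β) / 2).re = 0 := by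
    simp [Complex.div_re, Complex.sub_re, Complex.mul_re]
  simp [Rmag, Complex.norm_exp, h]

lemma integral_shift (s : ℝ) (α : ℂ) (t : ℝ) (U : ℂ → ℂ) :
    (∫ z : ℂ, (1 + ‖z‖ ^ 2) ^ s * ‖U (z + α * t)‖ ^ 2)
      = ∫ z : ℂ, (1 + ‖z - α * t‖ ^ 2) ^ s * ‖U z‖ ^ 2 := by
  have := MeasureTheory.integral_add_right_eq_self (μ := (volume : Measure ℂ))
    (fun z : ℂ => (1 + ‖z - α * t‖ ^ 2) ^ s * ‖U z‖ ^ 2) (α * t)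
  simpa using this

/-- Traveling waves have growing weighted norms:
‖⟨z⟩ˢ u(t)‖_{L²} = ‖⟨z-αt⟩ˢ U‖_{L²} and ‖⟨z⟩ˢ u(t)‖_{L²}/(|α|ˢ|t|ˢ) → ‖U‖_{L²} as t → ±∞. -/
theorem stmt12 (s : ℝ) (hs : 0 ≤ s) (α : ℂ) (hα : α ≠ 0) (lam : ℝ)
    (U : ℂ → ℂ) (hU2 : MemLp U 2 volume)
    (hUs : Integrable (fun z : ℂ => (1 + ‖z‖ ^ 2) ^ s * ‖U z‖ ^ 2))
    (hUne : U ≠ 0)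
    (u : ℝ → ℂ → ℂ)
    (hu : ∀ t z, u t z = Complex.exp (-Complex.I * lam * t) * Rmag (α * t) U z) :
    (∀ t : ℝ, Real.sqrt (∫ z : ℂ, (1 + ‖z‖ ^ 2) ^ s * ‖u t z‖ ^ 2)
        = Real.sqrt (∫ z : ℂ, (1 + ‖z - α * t‖ ^ 2) ^ s * ‖U z‖ ^ 2))
    ∧ Tendsto (fun t : ℝ =>
        Real.sqrt (∫ z : ℂ, (1 + ‖z‖ ^ 2) ^ s * ‖u t z‖ ^ 2) / (‖α‖ ^ s * |t| ^ s))
        atTop (nhds (Real.sqrt (∫ z : ℂ, ‖U z‖ ^ 2)))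
    ∧ Tendsto (fun t : ℝ =>
        Real.sqrt (∫ z : ℂ, (1 + ‖z‖ ^ 2) ^ s * ‖u t z‖ ^ 2) / (‖α‖ ^ s * |t| ^ s))
        atBot (nhds (Real.sqrt (∫ z : ℂ, ‖U z‖ ^ 2))) := by
  have hnormu : ∀ t z, ‖u t z‖ = ‖U (z + α * t)‖ := by
    intro t z
    rw [hu t z, norm_mul, norm_Rmag]
    have h1 : ‖Complex.exp (-Complex.I * lam * t)‖ = 1 := by
      rw [Complex.norm_exp]
      have : (-Complex.I * (lam:ℂ) * (t:ℂ)).re = 0 := by simp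
      rw [this, Real.exp_zero]
    rw [h1, one_mul]
  have hint : ∀ t : ℝ, (∫ z : ℂ, (1 + ‖z‖ ^ 2) ^ s * ‖u t z‖ ^ 2)
      = ∫ z : ℂ, (1 + ‖z - α * t‖ ^ 2) ^ s * ‖U z‖ ^ 2 := by
    intro t
    rw [← integral_shift s α t U]
    congr 1
    funext z
    rw [hnormu t z]
  have h1 : ∀ t : ℝ, Real.sqrt (∫ z : ℂ, (1 + ‖z‖ ^ 2) ^ s * ‖u t z‖ ^ 2)
      = Real.sqrt (∫ z : ℂ, (1 + ‖z - α * t‖ ^ 2) ^ s * ‖U z‖ ^ 2) :=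
    fun t => congrArg Real.sqrt (hint t)
  refine ⟨h1, ?_, ?_⟩
  · have := key s hs α hα U hU2 hUs atTop tendsto_abs_atTop_atTop
    exact this.congr fun t => by rw [h1 t]
  · have := key s hs α hα U hU2 hUs atBot tendsto_abs_atBot_atTop
    exact this.congr fun t => by rw [h1 t]
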